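/- (Lemma 5.2, uniform solution estimates.) There exist constants M, M̃ > 0 and c₀, c̃₀ ≥ 0, all independent of s, such that for every s ∈ ℂ and every x : [0,1] → ℂⁿ for which w := H·x is continuously differentiable and s·x(ζ) = P₁ w′(ζ) + G₀ w(ζ) holds for all ζ ∈ [0,1], one has for all 0 ≤ τ ≤ ζ ≤ 1: M̃·e^{−|Re s|·c̃₀·(ζ−τ)}·‖w(τ)‖ ≤ ‖w(ζ)‖ ≤ M·e^{|Re s|·c₀·(ζ−τ)}·‖w(τ)‖, where ‖·‖ is the Euclidean norm on ℂⁿ. -/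

import Mathlib

open Matrix
open scoped ComplexOrder

section Aux

variable {n : ℕ}

lemma aux_coord_le (y : Fin n → ℂ) (j : Fin n) :
    ‖y j‖ ≤ ‖(EuclideanSpace.equiv (Fin n) ℂ).symm y‖ := by
  rw [EuclideanSpace.norm_eq]
  have h1 : ‖y j‖ ^ 2 ≤ ∑ i, ‖y i‖ ^ 2 :=
    Finset.single_le_sum (f := fun i => ‖y i‖^2) (fun i _ => sq_nonneg _) (Finset.mem_univ j)
  calc ‖y j‖ = Real.sqrt (‖y j‖ ^2) := by rw [Real.sqrt_sq (norm_nonneg _)]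
    _ ≤ _ := Real.sqrt_le_sqrt h1

lemma aux_norm_le_sum (y : Fin n → ℂ) :
    ‖(EuclideanSpace.equiv (Fin n) ℂ).symm y‖ ≤ ∑ i, ‖y i‖ := by
  rw [EuclideanSpace.norm_eq]
  calc Real.sqrt (∑ i, ‖((EuclideanSpace.equiv (Fin n) ℂ).symm y) i‖ ^ 2)
      ≤ Real.sqrt ((∑ i, ‖y i‖) ^ 2) :=
        Real.sqrt_le_sqrt (Finset.sum_sq_le_sq_sum_of_nonneg (fun i _ => norm_nonneg _))
    _ = ∑ i, ‖y i‖ := Real.sqrt_sq (Finset.sum_nonneg fun i _ => norm_nonneg _)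

lemma aux_mulVec_le (A : Matrix (Fin n) (Fin n) ℂ) (y : Fin n → ℂ) :
    ‖(EuclideanSpace.equiv (Fin n) ℂ).symm (A *ᵥ y)‖ ≤
      (∑ i, ∑ j, ‖A i j‖) * ‖(EuclideanSpace.equiv (Fin n) ℂ).symm y‖ := by
  calc ‖(EuclideanSpace.equiv (Fin n) ℂ).symm (A *ᵥ y)‖ ≤ ∑ i, ‖(A *ᵥ y) i‖ :=
        aux_norm_le_sum _
    _ ≤ ∑ i, ∑ j, ‖A i j‖ * ‖(EuclideanSpace.equiv (Fin n) ℂ).symm y‖ := by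
        refine Finset.sum_le_sum fun i _ => ?_
        calc ‖(A *ᵥ y) i‖ = ‖∑ j, A i j * y j‖ := by rfl
          _ ≤ ∑ j, ‖A i j * y j‖ := norm_sum_le _ _
          _ ≤ ∑ j, ‖A i j‖ * ‖(EuclideanSpace.equiv (Fin n) ℂ).symm y‖ := by
              refine Finset.sum_le_sum fun j _ => ?_
              rw [norm_mul]
              exact mul_le_mul_of_nonneg_left (aux_coord_le y j) (norm_nonneg _)
    _ = (∑ i, ∑ j, ‖A i j‖) * ‖(EuclideanSpace.equiv (Fin n) ℂ).symm y‖ := by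
        rw [Finset.sum_mul]; exact Finset.sum_congr rfl fun i _ => (Finset.sum_mul _ _ _).symm

lemma aux_gronwall_upper (φ φ' : ℝ → ℝ) (a τ ζ : ℝ) (hτζ : τ ≤ ζ)
    (hd : ∀ t ∈ Set.Icc τ ζ, HasDerivWithinAt φ (φ' t) (Set.Icc τ ζ) t)
    (hb : ∀ t ∈ Set.Icc τ ζ, φ' t ≤ a * φ t) :
    φ ζ ≤ φ τ * Real.exp (a * (ζ - τ)) := by
  set ψ : ℝ → ℝ := fun t => φ t * Real.exp (-a * t) with hψdef
  have hψ : ∀ t ∈ Set.Icc τ ζ,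
      HasDerivWithinAt ψ ((φ' t - a * φ t) * Real.exp (-a * t)) (Set.Icc τ ζ) t := by
    intro t ht
    have hexp : HasDerivAt (fun t : ℝ => Real.exp (-a * t)) (Real.exp (-a * t) * (-a * 1)) t :=
      ((hasDerivAt_id t).const_mul (-a)).exp
    have := (hd t ht).fun_mul hexp.hasDerivWithinAt
    exact this.congr_deriv (by ring)
  have hanti : AntitoneOn ψ (Set.Icc τ ζ) := by
    apply antitoneOn_of_deriv_nonpos (convex_Icc τ ζ)
    · exact fun t ht => (hψ t ht).continuousWithinAt
    · intro x hx
      rw [interior_Icc] at hx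
      exact ((hψ x (Set.Ioo_subset_Icc_self hx)).hasDerivAt
        (Icc_mem_nhds hx.1 hx.2)).differentiableAt.differentiableWithinAt
    · intro x hx
      rw [interior_Icc] at hx
      have hda := (hψ x (Set.Ioo_subset_Icc_self hx)).hasDerivAt (Icc_mem_nhds hx.1 hx.2)
      rw [hda.deriv]
      have h1 : φ' x - a * φ x ≤ 0 := sub_nonpos.mpr (hb x (Set.Ioo_subset_Icc_self hx))
      exact mul_nonpos_of_nonpos_of_nonneg h1 (Real.exp_pos _).le
  have h := hanti (Set.left_mem_Icc.mpr hτζ) (Set.right_mem_Icc.mpr hτζ) hτζ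
  have h2 := mul_le_mul_of_nonneg_right h (Real.exp_pos (a * ζ)).le
  simp only [hψdef] at h2
  calc φ ζ = φ ζ * Real.exp (-a * ζ) * Real.exp (a * ζ) := by
        rw [mul_assoc, ← Real.exp_add]; ring_nf; simp
    _ ≤ φ τ * Real.exp (-a * τ) * Real.exp (a * ζ) := h2
    _ = φ τ * Real.exp (a * (ζ - τ)) := by rw [mul_assoc, ← Real.exp_add]; ring_nf

lemma aux_gronwall_lower (φ φ' : ℝ → ℝ) (a τ ζ : ℝ) (hτζ : τ ≤ ζ)
    (hd : ∀ t ∈ Set.Icc τ ζ, HasDerivWithinAt φ (φ' t) (Set.Icc τ ζ) t)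
    (hb : ∀ t ∈ Set.Icc τ ζ, -(a * φ t) ≤ φ' t) :
    φ τ * Real.exp (-(a * (ζ - τ))) ≤ φ ζ := by
  set ψ : ℝ → ℝ := fun t => φ t * Real.exp (a * t) with hψdef
  have hψ : ∀ t ∈ Set.Icc τ ζ,
      HasDerivWithinAt ψ ((φ' t + a * φ t) * Real.exp (a * t)) (Set.Icc τ ζ) t := by
    intro t ht
    have hexp : HasDerivAt (fun t : ℝ => Real.exp (a * t)) (Real.exp (a * t) * (a * 1)) t :=
      ((hasDerivAt_id t).const_mul a).exp
    have := (hd t ht).fun_mul hexp.hasDerivWithinAt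
    exact this.congr_deriv (by ring)
  have hmono : MonotoneOn ψ (Set.Icc τ ζ) := by
    apply monotoneOn_of_deriv_nonneg (convex_Icc τ ζ)
    · exact fun t ht => (hψ t ht).continuousWithinAt
    · intro x hx
      rw [interior_Icc] at hx
      exact ((hψ x (Set.Ioo_subset_Icc_self hx)).hasDerivAt
        (Icc_mem_nhds hx.1 hx.2)).differentiableAt.differentiableWithinAt
    · intro x hx
      rw [interior_Icc] at hx
      have hda := (hψ x (Set.Ioo_subset_Icc_self hx)).hasDerivAt (Icc_mem_nhds hx.1 hx.2)
      rw [hda.deriv]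
      have h1 : 0 ≤ φ' x + a * φ x := by
        have := hb x (Set.Ioo_subset_Icc_self hx); linarith
      exact mul_nonneg h1 (Real.exp_pos _).le
  have h := hmono (Set.left_mem_Icc.mpr hτζ) (Set.right_mem_Icc.mpr hτζ) hτζ
  have h2 := mul_le_mul_of_nonneg_right h (Real.exp_pos (-(a * ζ))).le
  simp only [hψdef] at h2
  calc φ τ * Real.exp (-(a * (ζ - τ))) = φ τ * Real.exp (a * τ) * Real.exp (-(a * ζ)) := by
        rw [mul_assoc, ← Real.exp_add]; ring_nf
    _ ≤ φ ζ * Real.exp (a * ζ) * Real.exp (-(a * ζ)) := h2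
    _ = φ ζ := by rw [mul_assoc, ← Real.exp_add]; ring_nf; simp

end Aux

/-- Lemma 5.2, uniform solution estimates: there exist constants
`M, M̃ > 0` and `c₀, c̃₀ ≥ 0`, independent of `s`, such that every solution `w = Hx` of
`s·x = P₁ w′ + G₀ w` on `[0,1]` satisfies, for `0 ≤ τ ≤ ζ ≤ 1`,
`M̃·e^{−|Re s|·c̃₀·(ζ−τ)}·‖w(τ)‖ ≤ ‖w(ζ)‖ ≤ M·e^{|Re s|·c₀·(ζ−τ)}·‖w(τ)‖`
(Euclidean norms on `ℂⁿ`). -/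
theorem uniform_solution_estimates
    (n : ℕ) (hn : 0 < n)
    (P₁ : Matrix (Fin n) (Fin n) ℂ) (hP₁herm : P₁.IsHermitian) (hP₁inv : IsUnit P₁)
    (G₀ : Matrix (Fin n) (Fin n) ℂ)
    (H : ℝ → Matrix (Fin n) (Fin n) ℂ)
    (hHcont : ∀ i j, ContinuousOn (fun ζ => H ζ i j) (Set.Icc 0 1))
    (hHherm : ∀ ζ ∈ Set.Icc (0 : ℝ) 1, (H ζ).IsHermitian)
    (hHpos : ∀ ζ ∈ Set.Icc (0 : ℝ) 1, (H ζ).PosDef)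
    -- the diagonalization `P₁H(ζ) = S(ζ)⁻¹ Δ(ζ) S(ζ)` with `S, S⁻¹, Δ` continuously
    -- differentiable and `Δ(ζ)` diagonal with real entries
    (S Δ S' Δ' Sinv' : ℝ → Matrix (Fin n) (Fin n) ℂ)
    (hS' : ∀ i j, ∀ ζ ∈ Set.Icc (0 : ℝ) 1,
      HasDerivWithinAt (fun ξ => S ξ i j) (S' ζ i j) (Set.Icc 0 1) ζ)
    (hS'cont : ∀ i j, ContinuousOn (fun ζ => S' ζ i j) (Set.Icc 0 1))
    (hΔ' : ∀ i j, ∀ ζ ∈ Set.Icc (0 : ℝ) 1,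
      HasDerivWithinAt (fun ξ => Δ ξ i j) (Δ' ζ i j) (Set.Icc 0 1) ζ)
    (hΔ'cont : ∀ i j, ContinuousOn (fun ζ => Δ' ζ i j) (Set.Icc 0 1))
    (hSinv' : ∀ i j, ∀ ζ ∈ Set.Icc (0 : ℝ) 1,
      HasDerivWithinAt (fun ξ => (S ξ)⁻¹ i j) (Sinv' ζ i j) (Set.Icc 0 1) ζ)
    (hSinv'cont : ∀ i j, ContinuousOn (fun ζ => Sinv' ζ i j) (Set.Icc 0 1))
    (hSunit : ∀ ζ ∈ Set.Icc (0 : ℝ) 1, IsUnit (S ζ))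
    (hΔunit : ∀ ζ ∈ Set.Icc (0 : ℝ) 1, IsUnit (Δ ζ))
    (d : Fin n → ℝ → ℝ)
    (hΔdiag : ∀ ζ ∈ Set.Icc (0 : ℝ) 1, Δ ζ = Matrix.diagonal (fun k => ((d k ζ : ℝ) : ℂ)))
    (hdiagz : ∀ ζ ∈ Set.Icc (0 : ℝ) 1, P₁ * H ζ = (S ζ)⁻¹ * Δ ζ * S ζ) :
    ∃ M > (0 : ℝ), ∃ Mt > (0 : ℝ), ∃ c₀ ≥ (0 : ℝ), ∃ ct₀ ≥ (0 : ℝ),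
      ∀ (s : ℂ) (x w w' : ℝ → Fin n → ℂ),
        (∀ ζ ∈ Set.Icc (0 : ℝ) 1, w ζ = (H ζ) *ᵥ x ζ) →
        (∀ ζ ∈ Set.Icc (0 : ℝ) 1, HasDerivWithinAt w (w' ζ) (Set.Icc 0 1) ζ) →
        ContinuousOn w' (Set.Icc 0 1) →
        (∀ ζ ∈ Set.Icc (0 : ℝ) 1, s • x ζ = P₁ *ᵥ w' ζ + G₀ *ᵥ w ζ) →
        ∀ τ ζ : ℝ, 0 ≤ τ → τ ≤ ζ → ζ ≤ 1 →
          Mt * Real.exp (-|s.re| * ct₀ * (ζ - τ)) *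
              ‖(EuclideanSpace.equiv (Fin n) ℂ).symm (w τ)‖ ≤
            ‖(EuclideanSpace.equiv (Fin n) ℂ).symm (w ζ)‖ ∧
          ‖(EuclideanSpace.equiv (Fin n) ℂ).symm (w ζ)‖ ≤
            M * Real.exp (|s.re| * c₀ * (ζ - τ)) *
              ‖(EuclideanSpace.equiv (Fin n) ℂ).symm (w τ)‖ := by
  classical
  have hScont : ∀ i j, ContinuousOn (fun ζ => S ζ i j) (Set.Icc 0 1) :=
    fun i j ζ hζ => ((hS' i j ζ hζ).continuousWithinAt)
  have hSinvcont : ∀ i j, ContinuousOn (fun ζ => (S ζ)⁻¹ i j) (Set.Icc 0 1) :=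
    fun i j ζ hζ => ((hSinv' i j ζ hζ).continuousWithinAt)
  have hΔcont : ∀ i j, ContinuousOn (fun ζ => Δ ζ i j) (Set.Icc 0 1) :=
    fun i j ζ hζ => ((hΔ' i j ζ hζ).continuousWithinAt)
  have hdnz : ∀ ζ ∈ Set.Icc (0:ℝ) 1, ∀ k, d k ζ ≠ 0 := by
    intro ζ hζ k
    have hu := hΔunit ζ hζ
    rw [hΔdiag ζ hζ] at hu
    have hdet := (Matrix.isUnit_iff_isUnit_det _).1 hu
    rw [Matrix.det_diagonal] at hdet
    intro h
    apply hdet.ne_zero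
    refine Finset.prod_eq_zero (Finset.mem_univ k) ?_
    rw [h]; simp
  have hdcont : ∀ k, ContinuousOn (fun ζ => d k ζ) (Set.Icc (0:ℝ) 1) := by
    intro k
    apply ContinuousOn.congr (Complex.continuous_re.comp_continuousOn (hΔcont k k))
    intro ζ hζ
    show d k ζ = (Δ ζ k k).re
    rw [hΔdiag ζ hζ]
    simp [Matrix.diagonal_apply_eq]
  -- constants
  obtain ⟨c1, hc1⟩ := (isCompact_Icc (a := (0:ℝ)) (b := 1)).exists_bound_of_continuousOn
    (f := fun ζ => ∑ k, |(d k ζ)⁻¹|)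
    (continuousOn_finset_sum _ fun k _ => ((hdcont k).inv₀ (fun ζ hζ => hdnz ζ hζ k)).abs)
  set cB : ℝ := max c1 0 with hcBdef
  have hcB0 : 0 ≤ cB := le_max_right _ _
  have hcB : ∀ ζ ∈ Set.Icc (0:ℝ) 1, ∑ k, |(d k ζ)⁻¹| ≤ cB := by
    intro ζ hζ
    exact (le_abs_self _).trans ((hc1 ζ hζ).trans (le_max_left _ _))
  obtain ⟨k1, hk1⟩ := (isCompact_Icc (a := (0:ℝ)) (b := 1)).exists_bound_of_continuousOn
    (f := fun ζ => ∑ i, ∑ j, ‖(S ζ)ᴴ i j‖)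
    (continuousOn_finset_sum _ fun i _ => continuousOn_finset_sum _ fun j _ =>
      ((hScont j i).star).norm)
  set K : ℝ := max k1 1 with hKdef
  have hK1 : (1:ℝ) ≤ K := le_max_right _ _
  have hK0 : (0:ℝ) < K := lt_of_lt_of_le one_pos hK1
  have hK : ∀ ζ ∈ Set.Icc (0:ℝ) 1, ∑ i, ∑ j, ‖(S ζ)ᴴ i j‖ ≤ K := by
    intro ζ hζ
    exact (le_abs_self _).trans ((hk1 ζ hζ).trans (le_max_left _ _))
  obtain ⟨k2, hk2⟩ := (isCompact_Icc (a := (0:ℝ)) (b := 1)).exists_bound_of_continuousOn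
    (f := fun ζ => ∑ i, ∑ j, ‖((S ζ)⁻¹)ᴴ i j‖)
    (continuousOn_finset_sum _ fun i _ => continuousOn_finset_sum _ fun j _ =>
      ((hSinvcont j i).star).norm)
  set K' : ℝ := max k2 1 with hK'def
  have hK'1 : (1:ℝ) ≤ K' := le_max_right _ _
  have hK'0 : (0:ℝ) < K' := lt_of_lt_of_le one_pos hK'1
  have hK' : ∀ ζ ∈ Set.Icc (0:ℝ) 1, ∑ i, ∑ j, ‖((S ζ)⁻¹)ᴴ i j‖ ≤ K' := by
    intro ζ hζ
    exact (le_abs_self _).trans ((hk2 ζ hζ).trans (le_max_left _ _))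
  -- the matrix B
  set Bm : ℝ → Matrix (Fin n) (Fin n) ℂ :=
    fun ζ => (Sinv' ζ)ᴴ * (S ζ)ᴴ - ((S ζ)⁻¹)ᴴ * P₁⁻¹ * G₀ * (S ζ)ᴴ with hBmdef
  have hBmcont : ∀ i j, ContinuousOn (fun ζ => Bm ζ i j) (Set.Icc (0:ℝ) 1) := by
    intro i j
    simp only [hBmdef, Matrix.sub_apply, Matrix.mul_apply, Matrix.conjTranspose_apply]
    apply ContinuousOn.sub
    · exact continuousOn_finset_sum _ fun k _ => ((hSinv'cont k i).star).mul ((hScont j k).star)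
    · apply continuousOn_finset_sum _ fun k _ => ?_
      apply ContinuousOn.mul ?_ ((hScont j k).star)
      apply continuousOn_finset_sum _ fun l _ => ?_
      apply ContinuousOn.mul ?_ continuousOn_const
      exact continuousOn_finset_sum _ fun m _ => ((hSinvcont m i).star).mul continuousOn_const
  obtain ⟨b1, hb1⟩ := (isCompact_Icc (a := (0:ℝ)) (b := 1)).exists_bound_of_continuousOn
    (f := fun ζ => ∑ i, ∑ j, ‖Bm ζ i j‖)
    (continuousOn_finset_sum _ fun i _ => continuousOn_finset_sum _ fun j _ =>
      (hBmcont i j).norm)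
  set Cb : ℝ := max b1 0 with hCbdef
  have hCb0 : 0 ≤ Cb := le_max_right _ _
  have hCb : ∀ ζ ∈ Set.Icc (0:ℝ) 1, ∑ i, ∑ j, ‖Bm ζ i j‖ ≤ Cb := by
    intro ζ hζ
    exact (le_abs_self _).trans ((hb1 ζ hζ).trans (le_max_left _ _))
  -- matrix identities
  have hSdet : ∀ ζ ∈ Set.Icc (0:ℝ) 1, IsUnit (S ζ).det :=
    fun ζ hζ => (Matrix.isUnit_iff_isUnit_det _).1 (hSunit ζ hζ)
  have hShdet : ∀ ζ ∈ Set.Icc (0:ℝ) 1, IsUnit ((S ζ)ᴴ).det := by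
    intro ζ hζ; rw [Matrix.det_conjTranspose]; exact (hSdet ζ hζ).star
  have hRSh : ∀ ζ ∈ Set.Icc (0:ℝ) 1, ((S ζ)⁻¹)ᴴ * (S ζ)ᴴ = 1 := by
    intro ζ hζ
    rw [Matrix.conjTranspose_nonsing_inv]
    exact Matrix.nonsing_inv_mul _ (hShdet ζ hζ)
  have hShR : ∀ ζ ∈ Set.Icc (0:ℝ) 1, (S ζ)ᴴ * ((S ζ)⁻¹)ᴴ = 1 := by
    intro ζ hζ
    rw [Matrix.conjTranspose_nonsing_inv]
    exact Matrix.mul_nonsing_inv _ (hShdet ζ hζ)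
  have hΔDinv : ∀ ζ ∈ Set.Icc (0:ℝ) 1,
      Δ ζ * Matrix.diagonal (fun k => (((d k ζ)⁻¹ : ℝ) : ℂ)) = 1 := by
    intro ζ hζ
    rw [hΔdiag ζ hζ, Matrix.diagonal_mul_diagonal]
    have he : (fun i => ((d i ζ : ℝ) : ℂ) * (((d i ζ)⁻¹ : ℝ) : ℂ)) = fun _ => (1:ℂ) := by
      funext k
      rw [← Complex.ofReal_mul, mul_inv_cancel₀ (hdnz ζ hζ k), Complex.ofReal_one]
    rw [he, Matrix.diagonal_one]
  have hΔherm : ∀ ζ ∈ Set.Icc (0:ℝ) 1, (Δ ζ)ᴴ = Δ ζ := by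
    intro ζ hζ
    have he : (star fun k => ((d k ζ : ℝ) : ℂ)) = fun k => ((d k ζ : ℝ) : ℂ) := by
      funext k
      simp [Complex.conj_ofReal]
    rw [hΔdiag ζ hζ, Matrix.diagonal_conjTranspose, he]
  have hHP : ∀ ζ ∈ Set.Icc (0:ℝ) 1, H ζ * P₁ = (S ζ)ᴴ * ((Δ ζ) * ((S ζ)⁻¹)ᴴ) := by
    intro ζ hζ
    have h := congrArg Matrix.conjTranspose (hdiagz ζ hζ)
    simp only [Matrix.conjTranspose_mul] at h
    rw [(hHherm ζ hζ).eq, hP₁herm.eq, hΔherm ζ hζ] at h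
    exact h
  have hHdet : ∀ ζ ∈ Set.Icc (0:ℝ) 1, IsUnit (H ζ).det :=
    fun ζ hζ => (Matrix.isUnit_iff_isUnit_det _).1 (hHpos ζ hζ).isUnit
  have hP₁det : IsUnit P₁.det := (Matrix.isUnit_iff_isUnit_det _).1 hP₁inv
  have hA : ∀ ζ ∈ Set.Icc (0:ℝ) 1, P₁⁻¹ * (H ζ)⁻¹
      = (S ζ)ᴴ * (Matrix.diagonal (fun k => (((d k ζ)⁻¹ : ℝ) : ℂ)) * ((S ζ)⁻¹)ᴴ) := by
    intro ζ hζ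
    rw [← Matrix.mul_inv_rev]
    apply Matrix.inv_eq_right_inv
    rw [hHP ζ hζ]
    have e1 : (S ζ)ᴴ * (Δ ζ * ((S ζ)⁻¹)ᴴ) *
        ((S ζ)ᴴ * (Matrix.diagonal (fun k => (((d k ζ)⁻¹ : ℝ) : ℂ)) * ((S ζ)⁻¹)ᴴ))
        = (S ζ)ᴴ * (Δ ζ * ((((S ζ)⁻¹)ᴴ * (S ζ)ᴴ) *
            (Matrix.diagonal (fun k => (((d k ζ)⁻¹ : ℝ) : ℂ)) * ((S ζ)⁻¹)ᴴ))) := by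
      simp only [Matrix.mul_assoc]
    rw [e1, hRSh ζ hζ, Matrix.one_mul, ← Matrix.mul_assoc (Δ ζ), hΔDinv ζ hζ,
      Matrix.one_mul, hShR ζ hζ]
  refine ⟨K * K' * Real.exp Cb, by positivity, Real.exp (-Cb) / (K * K'), by positivity,
    cB, hcB0, cB, hcB0, ?_⟩
  intro s x w w' hw hw' hw'c heq τ ζ2 hτ0 hτζ hζ1
  have hτI : τ ∈ Set.Icc (0:ℝ) 1 := ⟨hτ0, le_trans hτζ hζ1⟩
  have hζI : ζ2 ∈ Set.Icc (0:ℝ) 1 := ⟨le_trans hτ0 hτζ, hζ1⟩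
  have hsub : Set.Icc τ ζ2 ⊆ Set.Icc (0:ℝ) 1 := Set.Icc_subset_Icc hτ0 hζ1
  set v : ℝ → Fin n → ℂ := fun t => ((S t)⁻¹)ᴴ *ᵥ w t with hvdef
  set vd : ℝ → Fin n → ℂ := fun t => (Sinv' t)ᴴ *ᵥ w t + ((S t)⁻¹)ᴴ *ᵥ w' t with hvddef
  have hx : ∀ t ∈ Set.Icc (0:ℝ) 1, x t = (H t)⁻¹ *ᵥ w t := by
    intro t ht
    rw [hw t ht, Matrix.mulVec_mulVec, Matrix.nonsing_inv_mul _ (hHdet t ht), Matrix.one_mulVec]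
  have hwv : ∀ t ∈ Set.Icc (0:ℝ) 1, w t = (S t)ᴴ *ᵥ v t := by
    intro t ht
    show w t = (S t)ᴴ *ᵥ (((S t)⁻¹)ᴴ *ᵥ w t)
    rw [Matrix.mulVec_mulVec, hShR t ht, Matrix.one_mulVec]
  have hw'eq : ∀ t ∈ Set.Icc (0:ℝ) 1,
      w' t = s • ((S t)ᴴ *ᵥ (Matrix.diagonal (fun k => (((d k t)⁻¹ : ℝ) : ℂ)) *ᵥ v t))
        - (P₁⁻¹ * G₀) *ᵥ w t := by
    intro t ht
    have h1 : P₁⁻¹ *ᵥ (s • x t) = P₁⁻¹ *ᵥ (P₁ *ᵥ w' t + G₀ *ᵥ w t) := by rw [heq t ht]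
    rw [Matrix.mulVec_smul, Matrix.mulVec_add, Matrix.mulVec_mulVec, Matrix.mulVec_mulVec,
      Matrix.nonsing_inv_mul _ hP₁det, Matrix.one_mulVec] at h1
    have h2 : w' t = s • (P₁⁻¹ *ᵥ x t) - (P₁⁻¹ * G₀) *ᵥ w t :=
      eq_sub_of_add_eq h1.symm
    rw [h2, hx t ht, Matrix.mulVec_mulVec, hA t ht]
    congr 1
    rw [← Matrix.mulVec_mulVec, ← Matrix.mulVec_mulVec]
  have hvode : ∀ t ∈ Set.Icc (0:ℝ) 1,
      vd t = s • (Matrix.diagonal (fun k => (((d k t)⁻¹ : ℝ) : ℂ)) *ᵥ v t) + Bm t *ᵥ v t := by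
    intro t ht
    have e1 : ((S t)⁻¹)ᴴ *ᵥ w' t
        = s • (Matrix.diagonal (fun k => (((d k t)⁻¹ : ℝ) : ℂ)) *ᵥ v t)
          - (((S t)⁻¹)ᴴ * P₁⁻¹ * G₀ * (S t)ᴴ) *ᵥ v t := by
      rw [hw'eq t ht, Matrix.mulVec_sub, Matrix.mulVec_smul]
      congr 1
      · congr 1
        simp only [Matrix.mulVec_mulVec, ← Matrix.mul_assoc]
        rw [hRSh t ht, Matrix.one_mul]
      · conv_lhs => rw [hwv t ht]
        simp only [Matrix.mulVec_mulVec, Matrix.mul_assoc]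
    have e2 : (Sinv' t)ᴴ *ᵥ w t = ((Sinv' t)ᴴ * (S t)ᴴ) *ᵥ v t := by
      conv_lhs => rw [hwv t ht]
      rw [Matrix.mulVec_mulVec]
    show (Sinv' t)ᴴ *ᵥ w t + ((S t)⁻¹)ᴴ *ᵥ w' t = _
    rw [e1, e2, hBmdef]
    simp only [Matrix.sub_mulVec]
    abel
  -- derivative of v
  have hwc : ∀ t ∈ Set.Icc (0:ℝ) 1, ∀ i,
      HasDerivWithinAt (fun ξ => w ξ i) (w' t i) (Set.Icc 0 1) t :=
    fun t ht i => hasDerivWithinAt_pi.1 (hw' t ht) i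
  have hRder : ∀ (i j : Fin n), ∀ t ∈ Set.Icc (0:ℝ) 1,
      HasDerivWithinAt (fun ξ => ((S ξ)⁻¹)ᴴ i j) ((Sinv' t)ᴴ i j) (Set.Icc 0 1) t := by
    intro i j t ht
    simpa only [Matrix.conjTranspose_apply] using (hSinv' j i t ht).star
  have hvder : ∀ t ∈ Set.Icc (0:ℝ) 1, HasDerivWithinAt v (vd t) (Set.Icc 0 1) t := by
    intro t ht
    rw [hasDerivWithinAt_pi]
    intro i
    have hj : ∀ j ∈ Finset.univ, HasDerivWithinAt (fun ξ => ((S ξ)⁻¹)ᴴ i j * w ξ j)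
        ((Sinv' t)ᴴ i j * w t j + ((S t)⁻¹)ᴴ i j * w' t j) (Set.Icc 0 1) t :=
      fun j _ => (hRder i j t ht).mul (hwc t ht j)
    have hsum := HasDerivWithinAt.fun_sum hj
    have hfeq : (fun ξ => ∑ j, ((S ξ)⁻¹)ᴴ i j * w ξ j) = fun ξ => v ξ i := by
      funext ξ
      simp [hvdef, Matrix.mulVec, dotProduct]
    have hdeq : ∑ j, ((Sinv' t)ᴴ i j * w t j + ((S t)⁻¹)ᴴ i j * w' t j) = vd t i := by
      simp [hvddef, Matrix.mulVec, dotProduct, Finset.sum_add_distrib]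
    rw [hfeq, hdeq] at hsum
    exact hsum
  -- pass to EuclideanSpace
  set E := EuclideanSpace.equiv (Fin n) ℂ with hEdef
  have hVder : ∀ t ∈ Set.Icc (0:ℝ) 1,
      HasDerivWithinAt (fun u => E.symm (v u)) (E.symm (vd t)) (Set.Icc 0 1) t := by
    intro t ht
    exact ((E.symm.toContinuousLinearMap.restrictScalars ℝ).hasFDerivAt.comp_hasDerivWithinAt
      t (hvder t ht))
  set V : ℝ → EuclideanSpace ℂ (Fin n) := fun u => E.symm (v u) with hVdef
  set φ : ℝ → ℝ := fun u => ‖V u‖^2 with hφdef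
  set φd : ℝ → ℝ := fun u => 2 * (inner ℂ (V u) (E.symm (vd u)) : ℂ).re with hφddef
  have hφder : ∀ t ∈ Set.Icc (0:ℝ) 1, HasDerivWithinAt φ (φd t) (Set.Icc 0 1) t := by
    intro t ht
    have h1 := (hVder t ht).inner ℂ (hVder t ht)
    have h2 := Complex.reCLM.hasFDerivAt.comp_hasDerivWithinAt t h1
    have hfeq : (fun u => Complex.reCLM ((inner ℂ (V u) (V u) : ℂ))) = φ := by
      funext u
      show (inner ℂ (V u) (V u) : ℂ).re = φ u
      rw [hφdef]
      exact inner_self_eq_norm_sq (𝕜 := ℂ) (V u)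
    have hdeq : Complex.reCLM
        ((inner ℂ (V t) (E.symm (vd t)) : ℂ) + (inner ℂ (E.symm (vd t)) (V t) : ℂ)) = φd t := by
      have hcs : (inner ℂ (E.symm (vd t)) (V t) : ℂ)
          = starRingEnd ℂ (inner ℂ (V t) (E.symm (vd t)) : ℂ) := (inner_conj_symm _ _).symm
      show ((inner ℂ (V t) (E.symm (vd t)) : ℂ) + (inner ℂ (E.symm (vd t)) (V t) : ℂ)).re
        = 2 * (inner ℂ (V t) (E.symm (vd t)) : ℂ).re
      rw [hcs, Complex.add_re, Complex.conj_re]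
      ring
    have h3 := h2.congr (fun y _ => (congrFun hfeq y).symm) (congrFun hfeq t).symm
    rw [hdeq] at h3
    exact h3
  have hφnonneg : ∀ t, 0 ≤ φ t := fun t => sq_nonneg _
  have hcoordsq : ∀ t (k : Fin n), ‖v t k‖^2 ≤ φ t := by
    intro t k
    exact pow_le_pow_left₀ (norm_nonneg _) (aux_coord_le (v t) k) 2
  have hbound : ∀ t ∈ Set.Icc (0:ℝ) 1, |φd t| ≤ (2 * (|s.re| * cB + Cb)) * φ t := by
    intro t ht
    have hsplit : (inner ℂ (V t) (E.symm (vd t)) : ℂ)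
        = s * (inner ℂ (V t)
            (E.symm (Matrix.diagonal (fun k => (((d k t)⁻¹ : ℝ) : ℂ)) *ᵥ v t)) : ℂ)
          + (inner ℂ (V t) (E.symm (Bm t *ᵥ v t)) : ℂ) := by
      rw [hvode t ht, map_add, _root_.map_smul, inner_add_right, inner_smul_right]
    set rr : ℝ := ∑ k, (d k t)⁻¹ * ‖v t k‖^2 with hrrdef
    have hinner1 : (inner ℂ (V t)
        (E.symm (Matrix.diagonal (fun k => (((d k t)⁻¹ : ℝ) : ℂ)) *ᵥ v t)) : ℂ) = (rr : ℂ) := by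
      rw [PiLp.inner_apply]
      have hterm : ∀ k ∈ Finset.univ, (inner ℂ (V t k)
          ((E.symm (Matrix.diagonal (fun k => (((d k t)⁻¹ : ℝ) : ℂ)) *ᵥ v t)) k) : ℂ)
          = (((d k t)⁻¹ * ‖v t k‖^2 : ℝ) : ℂ) := by
        intro k _
        rw [RCLike.inner_apply]
        show ((Matrix.diagonal (fun k => (((d k t)⁻¹ : ℝ) : ℂ)) *ᵥ v t) k) * (starRingEnd ℂ) (v t k)
          = _
        rw [Matrix.mulVec_diagonal]
        rw [show ((((d k t)⁻¹ : ℝ) : ℂ) * v t k) * (starRingEnd ℂ) (v t k)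
            = (((d k t)⁻¹ : ℝ) : ℂ) * ((v t k) * (starRingEnd ℂ) (v t k)) by ring,
          Complex.mul_conj, Complex.normSq_eq_norm_sq]
        push_cast
        ring
      rw [Finset.sum_congr rfl hterm, hrrdef]
      norm_cast
    have hre : (s * ((rr : ℝ) : ℂ)).re = s.re * rr := by
      simp [Complex.mul_re]
    have hrrbound : |rr| ≤ cB * φ t := by
      calc |rr| ≤ ∑ k, |(d k t)⁻¹ * ‖v t k‖^2| := Finset.abs_sum_le_sum_abs _ _
        _ = ∑ k, |(d k t)⁻¹| * ‖v t k‖^2 := by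
            refine Finset.sum_congr rfl fun k _ => ?_
            rw [abs_mul, abs_of_nonneg (sq_nonneg ‖v t k‖)]
        _ ≤ ∑ k, |(d k t)⁻¹| * φ t := Finset.sum_le_sum fun k _ =>
            mul_le_mul_of_nonneg_left (hcoordsq t k) (abs_nonneg _)
        _ = (∑ k, |(d k t)⁻¹|) * φ t := (Finset.sum_mul _ _ _).symm
        _ ≤ cB * φ t := mul_le_mul_of_nonneg_right (hcB t ht) (hφnonneg t)
    have hBv : ‖E.symm (Bm t *ᵥ v t)‖ ≤ Cb * ‖V t‖ := by
      have h1 := aux_mulVec_le (Bm t) (v t)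
      exact h1.trans (mul_le_mul_of_nonneg_right (hCb t ht) (norm_nonneg _))
    have hreB : |(inner ℂ (V t) (E.symm (Bm t *ᵥ v t)) : ℂ).re| ≤ Cb * φ t := by
      calc |(inner ℂ (V t) (E.symm (Bm t *ᵥ v t)) : ℂ).re|
          ≤ ‖(inner ℂ (V t) (E.symm (Bm t *ᵥ v t)) : ℂ)‖ := by
            exact Complex.abs_re_le_norm _
        _ ≤ ‖V t‖ * ‖E.symm (Bm t *ᵥ v t)‖ := norm_inner_le_norm _ _
        _ ≤ ‖V t‖ * (Cb * ‖V t‖) := mul_le_mul_of_nonneg_left hBv (norm_nonneg _)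
        _ = Cb * φ t := by rw [hφdef]; ring
    have hφdval : φd t = 2 * (s.re * rr + (inner ℂ (V t) (E.symm (Bm t *ᵥ v t)) : ℂ).re) := by
      show 2 * (inner ℂ (V t) (E.symm (vd t)) : ℂ).re = _
      rw [hsplit, Complex.add_re, hinner1, hre]
    rw [hφdval]
    calc |2 * (s.re * rr + (inner ℂ (V t) (E.symm (Bm t *ᵥ v t)) : ℂ).re)|
        = 2 * |s.re * rr + (inner ℂ (V t) (E.symm (Bm t *ᵥ v t)) : ℂ).re| := by
          rw [abs_mul]; norm_num
      _ ≤ 2 * (|s.re * rr| + |(inner ℂ (V t) (E.symm (Bm t *ᵥ v t)) : ℂ).re|) := by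
          have := abs_add_le (s.re * rr) ((inner ℂ (V t) (E.symm (Bm t *ᵥ v t)) : ℂ).re)
          linarith
      _ ≤ 2 * (|s.re| * (cB * φ t) + Cb * φ t) := by
          have h1 : |s.re * rr| ≤ |s.re| * (cB * φ t) := by
            rw [abs_mul]
            exact mul_le_mul_of_nonneg_left hrrbound (abs_nonneg _)
          linarith [hreB]
      _ = (2 * (|s.re| * cB + Cb)) * φ t := by ring
  set a : ℝ := 2 * (|s.re| * cB + Cb) with hadef
  have hup := aux_gronwall_upper φ φd a τ ζ2 hτζ
    (fun t ht => (hφder t (hsub ht)).mono hsub)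
    (fun t ht => (le_abs_self _).trans (hbound t (hsub ht)))
  have hlo := aux_gronwall_lower φ φd a τ ζ2 hτζ
    (fun t ht => (hφder t (hsub ht)).mono hsub)
    (fun t ht => by
      have h1 := hbound t (hsub ht)
      have h2 := neg_abs_le (φd t)
      linarith)
  have hVup : ‖V ζ2‖ ≤ ‖V τ‖ * Real.exp ((|s.re| * cB + Cb) * (ζ2 - τ)) := by
    have hexpsq : (Real.exp ((|s.re| * cB + Cb) * (ζ2 - τ)))^2 = Real.exp (a * (ζ2 - τ)) := by
      rw [sq, ← Real.exp_add, hadef]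
      ring_nf
    have h2 : φ ζ2 ≤ (‖V τ‖ * Real.exp ((|s.re| * cB + Cb) * (ζ2 - τ)))^2 := by
      calc φ ζ2 ≤ φ τ * Real.exp (a * (ζ2 - τ)) := hup
        _ = (‖V τ‖ * Real.exp ((|s.re| * cB + Cb) * (ζ2 - τ)))^2 := by
            rw [mul_pow, hexpsq]
    exact le_of_pow_le_pow_left₀ two_ne_zero (by positivity) h2
  have hVlo : ‖V τ‖ * Real.exp (-((|s.re| * cB + Cb) * (ζ2 - τ))) ≤ ‖V ζ2‖ := by
    have hexpsq : (Real.exp (-((|s.re| * cB + Cb) * (ζ2 - τ))))^2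
        = Real.exp (-(a * (ζ2 - τ))) := by
      rw [sq, ← Real.exp_add, hadef]
      ring_nf
    have h2 : (‖V τ‖ * Real.exp (-((|s.re| * cB + Cb) * (ζ2 - τ))))^2 ≤ φ ζ2 := by
      calc (‖V τ‖ * Real.exp (-((|s.re| * cB + Cb) * (ζ2 - τ))))^2
          = φ τ * Real.exp (-(a * (ζ2 - τ))) := by rw [mul_pow, hexpsq]
        _ ≤ φ ζ2 := hlo
    exact le_of_pow_le_pow_left₀ two_ne_zero (norm_nonneg _) h2
  have hWle : ∀ t ∈ Set.Icc (0:ℝ) 1, ‖E.symm (w t)‖ ≤ K * ‖V t‖ := by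
    intro t ht
    conv_lhs => rw [hwv t ht]
    exact (aux_mulVec_le _ _).trans (mul_le_mul_of_nonneg_right (hK t ht) (norm_nonneg _))
  have hVle : ∀ t ∈ Set.Icc (0:ℝ) 1, ‖V t‖ ≤ K' * ‖E.symm (w t)‖ := by
    intro t ht
    exact (aux_mulVec_le _ _).trans (mul_le_mul_of_nonneg_right (hK' t ht) (norm_nonneg _))
  have hd1 : ζ2 - τ ≤ 1 := by linarith
  have hd0 : (0:ℝ) ≤ ζ2 - τ := by linarith
  have hCbmul : Cb * (ζ2 - τ) ≤ Cb := by
    have := mul_le_mul_of_nonneg_left hd1 hCb0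
    linarith
  constructor
  · rw [div_mul_eq_mul_div, div_mul_eq_mul_div, div_le_iff₀ (by positivity)]
    have hexp : Real.exp (-Cb) * Real.exp (-|s.re| * cB * (ζ2 - τ))
        ≤ Real.exp (-((|s.re| * cB + Cb) * (ζ2 - τ))) := by
      rw [← Real.exp_add]
      apply Real.exp_le_exp.mpr
      have he : -((|s.re| * cB + Cb) * (ζ2 - τ))
          = -|s.re| * cB * (ζ2 - τ) - Cb * (ζ2 - τ) := by ring
      rw [he]
      linarith [hCbmul]
    calc Real.exp (-Cb) * Real.exp (-|s.re| * cB * (ζ2 - τ)) * ‖E.symm (w τ)‖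
        ≤ Real.exp (-Cb) * Real.exp (-|s.re| * cB * (ζ2 - τ)) * (K * ‖V τ‖) := by
          apply mul_le_mul_of_nonneg_left (hWle τ hτI) (by positivity)
      _ = K * (‖V τ‖ * (Real.exp (-Cb) * Real.exp (-|s.re| * cB * (ζ2 - τ)))) := by ring
      _ ≤ K * (‖V τ‖ * Real.exp (-((|s.re| * cB + Cb) * (ζ2 - τ)))) := by
          apply mul_le_mul_of_nonneg_left _ hK0.le
          exact mul_le_mul_of_nonneg_left hexp (norm_nonneg _)
      _ ≤ K * ‖V ζ2‖ := mul_le_mul_of_nonneg_left hVlo hK0.le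
      _ ≤ K * (K' * ‖E.symm (w ζ2)‖) := mul_le_mul_of_nonneg_left (hVle ζ2 hζI) hK0.le
      _ = ‖E.symm (w ζ2)‖ * (K * K') := by ring
  · have hexp2 : Real.exp ((|s.re| * cB + Cb) * (ζ2 - τ))
        ≤ Real.exp (|s.re| * cB * (ζ2 - τ)) * Real.exp Cb := by
      rw [← Real.exp_add]
      apply Real.exp_le_exp.mpr
      have he : (|s.re| * cB + Cb) * (ζ2 - τ)
          = |s.re| * cB * (ζ2 - τ) + Cb * (ζ2 - τ) := by ring
      rw [he]
      linarith [hCbmul]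
    calc ‖E.symm (w ζ2)‖ ≤ K * ‖V ζ2‖ := hWle ζ2 hζI
      _ ≤ K * (‖V τ‖ * Real.exp ((|s.re| * cB + Cb) * (ζ2 - τ))) :=
          mul_le_mul_of_nonneg_left hVup hK0.le
      _ ≤ K * ((K' * ‖E.symm (w τ)‖) * Real.exp ((|s.re| * cB + Cb) * (ζ2 - τ))) := by
          apply mul_le_mul_of_nonneg_left _ hK0.le
          exact mul_le_mul_of_nonneg_right (hVle τ hτI) (Real.exp_pos _).le
      _ ≤ K * ((K' * ‖E.symm (w τ)‖) *
            (Real.exp (|s.re| * cB * (ζ2 - τ)) * Real.exp Cb)) := by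
          apply mul_le_mul_of_nonneg_left _ hK0.le
          exact mul_le_mul_of_nonneg_left hexp2 (by positivity)
      _ = K * K' * Real.exp Cb * Real.exp (|s.re| * cB * (ζ2 - τ)) * ‖E.symm (w τ)‖ := by ring
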